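/- Let f : ℝⁿ → ℝ be differentiable, L-smooth with respect to η, and η-invex (f(y) − f(x) ≥ ⟨η(y,x), ∇f(x)⟩). Suppose η satisfies the triangle inequality: ‖η(y,z)‖² ≤ ‖η(x,z)‖² + b‖η(y,x)‖² − c⟨η(y,x), η(z,x)⟩ for all x, y, z and constants b, c > 0. Let x* be a global minimizer of f with ‖η(x₀, x*)‖ ≤ M < ∞, let α ∈ (0, 2/L), and let (x_k) satisfy η(x_{k+1}, x_k) = −α∇f(x_k). Then f(x_T) − f(x*) ≤ (1/T)·(1/(cα))·(1 + bαL/(2 − Lα))·M² for all T ≥ 1. -/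

import Mathlib

open RealInnerProductSpace

set_option maxHeartbeats 1000000 in
theorem invex_gd_convergence (n : ℕ) (f : EuclideanSpace ℝ (Fin n) → ℝ)
    (η : EuclideanSpace ℝ (Fin n) → EuclideanSpace ℝ (Fin n) → EuclideanSpace ℝ (Fin n))
    (L b c α M : ℝ) (hb : 0 < b) (hc : 0 < c)
    (hdiff : Differentiable ℝ f)
    (hsmooth : ∀ x y, f y ≤ f x + ⟪η y x, gradient f x⟫ + (L / 2) * ‖η y x‖ ^ 2)
    (hinvex : ∀ x y, f y - f x ≥ ⟪η y x, gradient f x⟫)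
    (htri : ∀ x y z, ‖η y z‖ ^ 2 ≤ ‖η x z‖ ^ 2 + b * ‖η y x‖ ^ 2 - c * ⟪η y x, η z x⟫)
    (xstar : EuclideanSpace ℝ (Fin n)) (hmin : ∀ y, f xstar ≤ f y)
    (x : ℕ → EuclideanSpace ℝ (Fin n))
    (hM : ‖η (x 0) xstar‖ ≤ M)
    (hα : α ∈ Set.Ioo (0 : ℝ) (2 / L))
    (hupdate : ∀ k, η (x (k + 1)) (x k) = -α • gradient f (x k)) :
    ∀ T : ℕ, 1 ≤ T →
      f (x T) - f xstar ≤ (1 / (T : ℝ)) * (1 / (c * α)) * (1 + b * α * L / (2 - L * α)) * M ^ 2 := by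
  obtain ⟨hα0, hα2⟩ := hα
  have hL : 0 < L := by
    by_contra h
    push_neg at h
    have : 2 / L ≤ 0 := div_nonpos_of_nonneg_of_nonpos (by norm_num) h
    linarith
  have hLα : 0 < 2 - L * α := by
    have := (lt_div_iff₀ hL).mp hα2
    nlinarith
  have hM0 : 0 ≤ M := le_trans (norm_nonneg _) hM
  -- gradient at minimizer is zero
  have hgstar : gradient f xstar = 0 := by
    have hloc : IsLocalMin f xstar := Filter.Eventually.of_forall hmin
    have hf : fderiv ℝ f xstar = 0 := hloc.fderiv_eq_zero
    unfold gradient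
    rw [hf, map_zero]
  set g : ℕ → EuclideanSpace ℝ (Fin n) := fun k => gradient f (x k) with hg
  have hΔ0 : ∀ k, 0 ≤ f (x k) - f xstar := fun k => sub_nonneg.mpr (hmin _)
  -- descent step
  have hdesc : ∀ k, α * (2 - L * α) / 2 * ‖g k‖ ^ 2
      ≤ (f (x k) - f xstar) - (f (x (k + 1)) - f xstar) := by
    intro k
    have h := hsmooth (x k) (x (k + 1))
    rw [hupdate k] at h
    have h1 : ⟪(-α : ℝ) • g k, g k⟫ = -α * ‖g k‖ ^ 2 := by
      rw [real_inner_smul_left, real_inner_self_eq_norm_sq]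
    have h2 : ‖(-α : ℝ) • g k‖ ^ 2 = α ^ 2 * ‖g k‖ ^ 2 := by
      rw [norm_smul, Real.norm_eq_abs, mul_pow, sq_abs]; ring
    rw [h1, h2] at h
    nlinarith [h]
  -- distance contraction step
  have hD : ∀ k, ‖η (x (k + 1)) xstar‖ ^ 2
      ≤ ‖η (x k) xstar‖ ^ 2 + b * α ^ 2 * ‖g k‖ ^ 2 - c * α * (f (x k) - f xstar) := by
    intro k
    have h := htri (x k) (x (k + 1)) xstar
    rw [hupdate k] at h
    have h1 : ⟪(-α : ℝ) • g k, η xstar (x k)⟫ = -α * ⟪η xstar (x k), g k⟫ := by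
      rw [real_inner_smul_left, real_inner_comm]
    have h2 : ‖(-α : ℝ) • g k‖ ^ 2 = α ^ 2 * ‖g k‖ ^ 2 := by
      rw [norm_smul, Real.norm_eq_abs, mul_pow, sq_abs]; ring
    rw [h1, h2] at h
    have hi : ⟪η xstar (x k), g k⟫ ≤ f xstar - f (x k) := hinvex (x k) xstar
    have hi' : c * α * ⟪η xstar (x k), g k⟫ ≤ c * α * (f xstar - f (x k)) :=
      mul_le_mul_of_nonneg_left hi (by positivity)
    linarith [h, hi']
  set β : ℝ := 2 * b * α / (2 - L * α) with hβdef
  have hβ0 : 0 ≤ β := by positivity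
  have hβeq : β * (α * (2 - L * α) / 2) = b * α ^ 2 := by
    rw [hβdef]
    rw [div_mul_eq_mul_div, div_eq_iff (ne_of_gt hLα)]
    ring
  -- key summed inequality
  have key : ∀ T : ℕ, c * α * (∑ k ∈ Finset.range T, (f (x k) - f xstar))
      + ‖η (x T) xstar‖ ^ 2 + β * (f (x T) - f xstar)
      ≤ ‖η (x 0) xstar‖ ^ 2 + β * (f (x 0) - f xstar) := by
    intro T
    induction T with
    | zero => simp
    | succ T ih =>
      rw [Finset.sum_range_succ]
      have h1 := hD T
      have h2 : β * (α * (2 - L * α) / 2 * ‖g T‖ ^ 2)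
          ≤ β * ((f (x T) - f xstar) - (f (x (T + 1)) - f xstar)) :=
        mul_le_mul_of_nonneg_left (hdesc T) hβ0
      rw [← mul_assoc, hβeq] at h2
      linarith
  -- monotonicity of function values
  have hmono : ∀ k, f (x (k + 1)) ≤ f (x k) := by
    intro k
    have h := hdesc k
    nlinarith [norm_nonneg (g k), sq_nonneg ‖g k‖, mul_pos hα0 hLα]
  have hanti : ∀ j k : ℕ, j ≤ k → f (x k) ≤ f (x j) := by
    intro j k hjk
    induction k with
    | zero => simp_all
    | succ k ih =>
      rcases Nat.lt_or_ge j (k + 1) with h | h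
      · exact le_trans (hmono k) (ih (Nat.lt_succ_iff.mp h))
      · have : j = k + 1 := le_antisymm hjk h
        rw [this]
  intro T hT
  have hTpos : (0 : ℝ) < T := by exact_mod_cast hT
  -- T * Δ_T ≤ sum
  have hsum : (T : ℝ) * (f (x T) - f xstar) ≤ ∑ k ∈ Finset.range T, (f (x k) - f xstar) := by
    have := Finset.card_nsmul_le_sum (Finset.range T) (fun k => f (x k) - f xstar)
      (f (x T) - f xstar) (fun i hi => by
        show f (x T) - f xstar ≤ f (x i) - f xstar
        have := hanti i T (le_of_lt (Finset.mem_range.mp hi))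
        linarith)
    simpa [nsmul_eq_mul] using this
  -- initial bounds
  have hD0 : ‖η (x 0) xstar‖ ^ 2 ≤ M ^ 2 := by
    nlinarith [norm_nonneg (η (x 0) xstar)]
  have hΔinit : f (x 0) - f xstar ≤ L / 2 * M ^ 2 := by
    have h := hsmooth xstar (x 0)
    rw [hgstar, inner_zero_right] at h
    nlinarith [norm_nonneg (η (x 0) xstar)]
  have hfinal : c * α * ((T : ℝ) * (f (x T) - f xstar))
      ≤ (1 + b * α * L / (2 - L * α)) * M ^ 2 := by
    have h1 := key T
    have h2 : c * α * ((T : ℝ) * (f (x T) - f xstar))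
        ≤ c * α * ∑ k ∈ Finset.range T, (f (x k) - f xstar) :=
      mul_le_mul_of_nonneg_left hsum (by positivity)
    have h3 : β * (f (x 0) - f xstar) ≤ β * (L / 2 * M ^ 2) :=
      mul_le_mul_of_nonneg_left hΔinit hβ0
    have h4 : β * (L / 2 * M ^ 2) = b * α * L / (2 - L * α) * M ^ 2 := by
      rw [hβdef]; field_simp [ne_of_gt hLα]
    linarith [h1, h2, h3, h4, hD0, sq_nonneg ‖η (x T) xstar‖,
      mul_nonneg hβ0 (hΔ0 T)]
  have hpos : 0 < c * α * (T : ℝ) := mul_pos (mul_pos hc hα0) hTpos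
  have hT0 : (T : ℝ) ≠ 0 := ne_of_gt hTpos
  rw [show (1 / (T : ℝ)) * (1 / (c * α)) * (1 + b * α * L / (2 - L * α)) * M ^ 2
      = (1 + b * α * L / (2 - L * α)) * M ^ 2 / (c * α * (T : ℝ)) by
    rw [eq_div_iff (ne_of_gt hpos)]
    field_simp]
  rw [le_div_iff₀ hpos]
  linarith [hfinal]
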